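/- If (α_n)_{n∈ℕ} is a sequence of isometries on a Hilbert space H satisfying α_j α_i = α_i α_{j-1} for all i < j, and x ∈ H is a fixed point of α_m (i.e., α_m x = x), then x is a fixed point of α_n for all n ≥ m. -/
import Mathlib

/-- If `(α n)` is a sequence of isometries on a Hilbert space `H` satisfying
`α j ∘ α i = α i ∘ α (j-1)` for all `i < j`, and `x` is a fixed point of `α m`,
then `x` is a fixed point of `α n` for all `n ≥ m`. -/
theorem fixed_point_propagates
    {H : Type*} [NormedAddCommGroup H] [InnerProductSpace ℂ H] [CompleteSpace H]
    (α : ℕ → H →ₗᵢ[ℂ] H)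
    (hps : ∀ i j : ℕ, i < j → ∀ x : H, α j (α i x) = α i (α (j - 1) x))
    (m : ℕ) (x : H) (hx : α m x = x) :
    ∀ n : ℕ, m ≤ n → α n x = x := by
  intro n hn
  induction n, hn using Nat.le_induction with
  | base => exact hx
  | succ n hmn ih =>
    have h := hps m (n + 1) (Nat.lt_succ_of_le hmn) x
    simp only [Nat.add_sub_cancel] at h
    rw [hx, ih, hx] at h
    exact h
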